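/- Let $f:\mathbb{R}\to\mathbb{R}$ be bounded and uniformly continuous. Then for every $t>0$ and $x\in\mathbb{R}$, $|E_t(f)(x) - f(x)| \le 2\,\omega_1\left(f; \frac{1}{t}\right)$, where $E_t(f)(x) = \int_{-\infty}^{+\infty} f(x-v) \cdot \frac{t\, e^{-t|v|}}{2}\, dv$. -/

import Mathlib

open MeasureTheory Filter

/-- The modulus of continuity `ω₁(f; δ) = sup {|f x - f y| : |x - y| ≤ δ}`. -/
noncomputable def omega1 (f : ℝ → ℝ) (δ : ℝ) : ℝ :=
  sSup {d : ℝ | ∃ x y : ℝ, |x - y| ≤ δ ∧ d = |f x - f y|}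

/-- The exponential convolution operator. -/
noncomputable def expConv (f : ℝ → ℝ) (t x : ℝ) : ℝ :=
  ∫ v : ℝ, f (x - v) * (t * Real.exp (-t * |v|) / 2)

open Set in
lemma my_integrable_comp_abs {f : ℝ → ℝ} (hf : IntegrableOn f (Ioi 0)) :
    Integrable (fun x => f |x|) := by
  have hIoi : IntegrableOn (fun x => f |x|) (Ioi 0) := by
    apply hf.congr_fun (fun x hx => ?_) measurableSet_Ioi
    rw [abs_of_pos hx]
  have hIic : IntegrableOn (fun x ↦ f |x|) (Iic 0) := by
    rw [← Measure.map_neg_eq_self (volume : Measure ℝ)]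
    let m : MeasurableEmbedding fun x : ℝ => -x := (Homeomorph.neg ℝ).measurableEmbedding
    rw [m.integrableOn_map_iff]
    simp_rw [Function.comp_def, abs_neg, neg_preimage, neg_Iic, neg_zero]
    exact Iff.mpr integrableOn_Ici_iff_integrableOn_Ioi hIoi
  have := hIic.union hIoi
  rwa [Iic_union_Ioi, integrableOn_univ] at this

lemma omega1_nonneg {f : ℝ → ℝ} {δ : ℝ} (hδ : 0 ≤ δ)
    (hB : BddAbove {d : ℝ | ∃ x y : ℝ, |x - y| ≤ δ ∧ d = |f x - f y|}) :
    0 ≤ omega1 f δ := by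
  apply le_csSup hB
  exact ⟨0, 0, by simpa using hδ, by simp⟩

lemma le_omega1 {f : ℝ → ℝ} {δ : ℝ}
    (hB : BddAbove {d : ℝ | ∃ x y : ℝ, |x - y| ≤ δ ∧ d = |f x - f y|})
    {a b : ℝ} (h : |a - b| ≤ δ) : |f a - f b| ≤ omega1 f δ :=
  le_csSup hB ⟨a, b, h, rfl⟩

lemma chain_omega1 {f : ℝ → ℝ} {δ : ℝ} (hδ : 0 < δ)
    (hB : BddAbove {d : ℝ | ∃ x y : ℝ, |x - y| ≤ δ ∧ d = |f x - f y|}) :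
    ∀ n : ℕ, ∀ a b : ℝ, |a - b| ≤ n * δ → |f a - f b| ≤ n * omega1 f δ := by
  intro n
  induction n with
  | zero =>
    intro a b h
    simp only [Nat.cast_zero, zero_mul] at h ⊢
    have : a = b := by
      have := abs_nonneg (a - b)
      have : |a - b| = 0 := le_antisymm h this
      linarith [abs_eq_zero.mp this, sub_eq_zero.mp (abs_eq_zero.mp this)]
    simp [this]
  | succ n ih =>
    intro a b h
    set c : ℝ := a - (a - b) / (n + 1) with hc
    have hn1 : (0:ℝ) < (n:ℝ) + 1 := by positivity
    have hab : |a - b| / ((n:ℝ) + 1) ≤ δ := by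
      rw [div_le_iff₀ hn1]
      calc |a - b| ≤ (↑(n+1)) * δ := h
        _ = δ * ((n:ℝ)+1) := by push_cast; ring
    have h1 : |a - c| ≤ δ := by
      rw [hc]
      have : a - (a - (a - b) / (n + 1)) = (a - b) / ((n:ℝ) + 1) := by ring
      rw [this, abs_div, abs_of_pos hn1]
      exact hab
    have h2 : |c - b| ≤ n * δ := by
      have : c - b = (a - b) * ((n:ℝ) / ((n:ℝ) + 1)) := by
        rw [hc]; field_simp; ring
      rw [this, abs_mul, abs_of_nonneg (by positivity : (0:ℝ) ≤ (n:ℝ)/((n:ℝ)+1))]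
      calc |a - b| * ((n:ℝ) / ((n:ℝ) + 1)) = |a - b| / ((n:ℝ)+1) * n := by ring
        _ ≤ δ * n := by
            apply mul_le_mul_of_nonneg_right hab (Nat.cast_nonneg n)
        _ = n * δ := mul_comm _ _
    calc |f a - f b| ≤ |f a - f c| + |f c - f b| := abs_sub_le _ _ _
      _ ≤ omega1 f δ + n * omega1 f δ := add_le_add (le_omega1 hB h1) (ih c b h2)
      _ = (↑(n+1)) * omega1 f δ := by push_cast; ring

theorem exp_conv_approx
    (f : ℝ → ℝ)
    (hf_bdd : ∃ M : ℝ, ∀ x : ℝ, |f x| ≤ M)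
    (hf_uc : UniformContinuous f) :
    ∀ t > (0 : ℝ), ∀ x : ℝ, |expConv f t x - f x| ≤ 2 * omega1 f (1 / t) := by
  obtain ⟨M, hM⟩ := hf_bdd
  intro t ht x
  have hδ : (0:ℝ) < 1 / t := by positivity
  set δ : ℝ := 1 / t with hδdef
  -- bounded above
  have hB : BddAbove {d : ℝ | ∃ x y : ℝ, |x - y| ≤ δ ∧ d = |f x - f y|} := by
    refine ⟨2 * M, ?_⟩
    rintro d ⟨a, b, -, rfl⟩
    calc |f a - f b| ≤ |f a| + |f b| := abs_sub _ _
      _ ≤ M + M := add_le_add (hM a) (hM b)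
      _ = 2 * M := by ring
  set ω : ℝ := omega1 f δ with hω
  have hω0 : 0 ≤ ω := omega1_nonneg hδ.le hB
  -- pointwise modulus bound
  have hmod : ∀ v : ℝ, |f (x - v) - f x| ≤ (1 + t * |v|) * ω := by
    intro v
    set n : ℕ := ⌈t * |v|⌉₊ with hn
    have htv : 0 ≤ t * |v| := by positivity
    have h1 : |x - v - x| ≤ n * δ := by
      have : t * |v| ≤ (n:ℝ) := Nat.le_ceil _
      have hxv : |x - v - x| = |v| := by rw [show x - v - x = -v by ring, abs_neg]
      rw [hxv, hδdef]
      rw [show (n:ℝ) * (1/t) = (n:ℝ)/t by ring, le_div_iff₀ ht]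
      linarith [this]
    have h2 := chain_omega1 hδ hB n (x - v) x h1
    have h3 : (n:ℝ) ≤ t * |v| + 1 := le_of_lt (Nat.ceil_lt_add_one htv)
    calc |f (x - v) - f x| ≤ n * ω := h2
      _ ≤ (t * |v| + 1) * ω := mul_le_mul_of_nonneg_right h3 hω0
      _ = (1 + t * |v|) * ω := by ring
  -- the kernel
  set g : ℝ → ℝ := fun v => t * Real.exp (-t * |v|) / 2 with hg
  have hg0 : ∀ v, 0 ≤ g v := fun v => by positivity
  -- integrability on Ioi 0 building blocks
  have hexp : IntegrableOn (fun u : ℝ => Real.exp (-t * u)) (Set.Ioi 0) := by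
    have := integrableOn_rpow_mul_exp_neg_mul_rpow (p := 1) (s := 0) (b := t)
      (by norm_num) zero_lt_one ht
    simpa using this
  have hlin : IntegrableOn (fun u : ℝ => u * Real.exp (-t * u)) (Set.Ioi 0) := by
    have := integrableOn_rpow_mul_exp_neg_mul_rpow (p := 1) (s := 1) (b := t)
      (by norm_num) zero_lt_one ht
    simpa using this
  -- integrable majorant H v = (1 + t|v|) * g v
  have hHint : Integrable (fun v : ℝ => (1 + t * |v|) * g v) := by
    have hF : IntegrableOn (fun u : ℝ => (1 + t * u) * (t * Real.exp (-t * u) / 2))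
        (Set.Ioi 0) := by
      have h1 := hexp.const_mul (t / 2)
      have h2 := hlin.const_mul (t * t / 2)
      have hsum : IntegrableOn
          (fun u : ℝ => (t/2) * Real.exp (-t*u) + (t*t/2) * (u * Real.exp (-t*u)))
          (Set.Ioi 0) := h1.add h2
      exact hsum.congr_fun (fun u _ => by ring) measurableSet_Ioi
    have := my_integrable_comp_abs hF
    exact this
  have hgint : Integrable g := by
    have hF : IntegrableOn (fun u : ℝ => t * Real.exp (-t * u) / 2) (Set.Ioi 0) := by
      have h1 : IntegrableOn (fun u : ℝ => (t/2) * Real.exp (-t*u)) (Set.Ioi 0) :=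
        hexp.const_mul (t / 2)
      exact h1.congr_fun (fun u _ => by ring) measurableSet_Ioi
    exact my_integrable_comp_abs hF
  -- integral values
  have Iexp : ∫ u in Set.Ioi (0:ℝ), Real.exp (-t * u) = 1 / t := by
    have := Real.integral_rpow_mul_exp_neg_mul_Ioi (a := 1) (r := t) one_pos ht
    simp only [sub_self, Real.rpow_zero, one_mul, Real.rpow_one, Real.Gamma_one, mul_one] at this
    rw [← this]
    congr 1 with u
    rw [neg_mul]
  have Ilin : ∫ u in Set.Ioi (0:ℝ), u * Real.exp (-t * u) = 1 / (t * t) := by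
    have := Real.integral_rpow_mul_exp_neg_mul_Ioi (a := 2) (r := t) two_pos ht
    have h2 : (2:ℝ) - 1 = 1 := by norm_num
    rw [h2] at this
    simp only [Real.rpow_one, Real.Gamma_two, mul_one] at this
    rw [show (1/(t*t):ℝ) = (1/t)^(2:ℝ) by
      rw [show ((2:ℝ)) = ((2:ℕ):ℝ) by norm_num, Real.rpow_natCast]; ring, ← this]
    congr 1 with u
    rw [neg_mul]
  have IH : ∫ v : ℝ, (1 + t * |v|) * g v = 2 := by
    have habs : (∫ v : ℝ, (1 + t * |v|) * g v)
        = 2 * ∫ u in Set.Ioi (0:ℝ), (1 + t * u) * (t * Real.exp (-t * u) / 2) :=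
      integral_comp_abs (f := fun u => (1 + t * u) * (t * Real.exp (-t * u) / 2))
    rw [habs]
    have hsplit : ∫ u in Set.Ioi (0:ℝ), (1 + t * u) * (t * Real.exp (-t * u) / 2)
        = ∫ u in Set.Ioi (0:ℝ),
            ((t/2) * Real.exp (-t * u) + (t*t/2) * (u * Real.exp (-t * u))) := by
      congr 1 with u; ring
    rw [hsplit, integral_add (hexp.const_mul (t/2)) (hlin.const_mul (t*t/2)),
      integral_const_mul, integral_const_mul, Iexp, Ilin]
    field_simp
    ring
  -- integral of kernel is 1
  have Ig : ∫ v : ℝ, g v = 1 := by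
    have habs : (∫ v : ℝ, g v)
        = 2 * ∫ u in Set.Ioi (0:ℝ), t * Real.exp (-t * u) / 2 :=
      integral_comp_abs (f := fun u => t * Real.exp (-t * u) / 2)
    rw [habs]
    have : ∫ u in Set.Ioi (0:ℝ), t * Real.exp (-t * u) / 2
        = ∫ u in Set.Ioi (0:ℝ), (t/2) * Real.exp (-t * u) := by
      congr 1 with u; ring
    rw [this, integral_const_mul, Iexp]
    field_simp
  -- integrability of f(x - v) * g v
  have hfmeas : AEStronglyMeasurable (fun v : ℝ => f (x - v)) volume :=
    (hf_uc.continuous.comp (continuous_const.sub continuous_id)).aestronglyMeasurable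
  have hfg : Integrable (fun v : ℝ => f (x - v) * g v) :=
    hgint.bdd_mul (c := M) hfmeas (Eventually.of_forall fun v => hM _)
  have hcg : Integrable (fun v : ℝ => f x * g v) := hgint.const_mul (f x)
  -- rewrite the difference
  have key : expConv f t x - f x = ∫ v : ℝ, (f (x - v) - f x) * g v := by
    have : expConv f t x = ∫ v : ℝ, f (x - v) * g v := rfl
    rw [this]
    rw [show (∫ v : ℝ, (f (x - v) - f x) * g v)
        = ∫ v : ℝ, (f (x - v) * g v - f x * g v) by congr 1 with v; ring]
    rw [integral_sub hfg hcg, integral_const_mul, Ig, mul_one]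
  rw [key]
  calc |∫ v : ℝ, (f (x - v) - f x) * g v|
      ≤ ∫ v : ℝ, |(f (x - v) - f x) * g v| := by
        simpa only [Real.norm_eq_abs] using
          norm_integral_le_integral_norm (μ := volume)
            (fun v : ℝ => (f (x - v) - f x) * g v)
    _ ≤ ∫ v : ℝ, ((1 + t * |v|) * g v) * ω := by
        apply integral_mono_of_nonneg
        · exact Eventually.of_forall fun v => abs_nonneg _
        · exact hHint.mul_const ω
        · apply Eventually.of_forall
          intro v
          show |(f (x - v) - f x) * g v| ≤ (1 + t * |v|) * g v * ω
          rw [abs_mul, abs_of_nonneg (hg0 v)]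
          have := hmod v
          calc |f (x - v) - f x| * g v ≤ ((1 + t * |v|) * ω) * g v :=
                mul_le_mul_of_nonneg_right this (hg0 v)
            _ = ((1 + t * |v|) * g v) * ω := by ring
    _ = 2 * ω := by rw [integral_mul_const, IH]
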